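/- With 𝓕(α) = 1 + α + ∑_{k=3}^∞ α/(A k + α·B k), the limit lim_{α→+∞} (𝓕(α) − (1 + α)) exists and equals ∑_{n=1}^∞ 1/F n, the sum of the reciprocals of the standard Fibonacci numbers. -/

import Mathlib

open Filter Real

lemma fib_lb : ∀ k : ℕ, ((3:ℝ)/2)^k ≤ (3/2) * Nat.fib (k+1) := by
  intro k
  induction k using Nat.twoStepInduction with
  | zero => norm_num
  | one => norm_num [Nat.fib]
  | more n ih1 ih2 =>
    have h : Nat.fib (n+1+1+1) = Nat.fib (n+1+1) + Nat.fib (n+1) := by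
      rw [Nat.fib_add_two]; ring
    rw [h]
    push_cast
    have e1 : ((3:ℝ)/2)^(n+1+1) = (9/4)*(3/2)^n := by ring
    have e2 : ((3:ℝ)/2)^(n+1) = (3/2)*(3/2)^n := by ring
    have := pow_nonneg (by norm_num : (0:ℝ) ≤ 3/2) n
    rw [e1]; rw [e2] at ih2
    linarith

lemma inv_fib_le (k : ℕ) : ((Nat.fib (k+1) : ℝ))⁻¹ ≤ (3/2) * (2/3)^k := by
  have hf : (0:ℝ) < Nat.fib (k+1) := by
    exact_mod_cast Nat.fib_pos.mpr (Nat.succ_pos k)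
  have h23 : ((2:ℝ)/3)^k * (3/2)^k = 1 := by rw [← mul_pow]; norm_num
  have h1 : (1:ℝ) ≤ (3/2) * (2/3)^k * Nat.fib (k+1) := by
    calc (1:ℝ) = (2/3)^k * (3/2)^k := h23.symm
    _ ≤ (2/3)^k * ((3/2) * Nat.fib (k+1)) :=
        mul_le_mul_of_nonneg_left (fib_lb k) (pow_nonneg (by norm_num) k)
    _ = (3/2) * (2/3)^k * Nat.fib (k+1) := by ring
  rw [inv_le_iff_one_le_mul₀ hf]
  linarith

lemma sum_bound : Summable (fun k : ℕ => (3:ℝ)/2 * (2/3)^k) :=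
  (summable_geometric_of_lt_one (by norm_num) (by norm_num)).mul_left _



/-- `𝓕(α) - (1 + α)` tends, as `α → +∞`, to the sum of the
reciprocals of the standard Fibonacci numbers `∑_{n=1}^∞ 1/F n`. -/
theorem F_limit_at_top (φ ψ : ℝ)
    (hφ : φ = (1 + Real.sqrt 5) / 2) (hψ : ψ = (1 - Real.sqrt 5) / 2)
    (A B F : ℕ → ℝ)
    (hA : ∀ n, A n = (φ ^ (n - 1) - ψ ^ (n - 1)) / (φ - ψ))
    (hB : ∀ n, B n = (φ * ψ ^ (n - 1) - ψ * φ ^ (n - 1)) / (φ - ψ))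
    (hF1 : F 1 = 1) (hF2 : F 2 = 1)
    (hFrec : ∀ n, 3 ≤ n → F n = F (n - 1) + F (n - 2))
    (𝓕 : ℝ → ℝ)
    (h𝓕 : ∀ α : ℝ, 𝓕 α = 1 + α + ∑' k : ℕ, α / (A (k + 3) + α * B (k + 3))) :
    Filter.Tendsto (fun α : ℝ => 𝓕 α - (1 + α)) Filter.atTop
      (nhds (∑' n : ℕ, 1 / F (n + 1))) := by

  have h5 : Real.sqrt 5 ≠ 0 := by positivity
  have hsub : φ - ψ = Real.sqrt 5 := by rw [hφ, hψ]; ring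
  have hmul : φ * ψ = -1 := by
    rw [hφ, hψ]
    have : Real.sqrt 5 * Real.sqrt 5 = 5 := Real.mul_self_sqrt (by norm_num)
    nlinarith
  have hbinet : ∀ n : ℕ, (Nat.fib n : ℝ) = (φ ^ n - ψ ^ n) / Real.sqrt 5 := by
    intro n; rw [hφ, hψ]; exact Real.coe_fib_eq n
  have hA' : ∀ k : ℕ, A (k + 3) = Nat.fib (k + 2) := by
    intro k
    rw [hA, hbinet, hsub]
    norm_num
  have hB' : ∀ k : ℕ, B (k + 3) = Nat.fib (k + 1) := by
    intro k
    rw [hB, hbinet, hsub]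
    have : φ * ψ ^ (k + 3 - 1) - ψ * φ ^ (k + 3 - 1) = φ ^ (k+1) - ψ ^ (k+1) := by
      show φ * ψ ^ (k + 2) - ψ * φ ^ (k + 2) = _
      have e1 : φ * ψ ^ (k + 2) = (φ * ψ) * ψ ^ (k+1) := by ring
      have e2 : ψ * φ ^ (k + 2) = (φ * ψ) * φ ^ (k+1) := by ring
      rw [e1, e2, hmul]; ring
    rw [this]
  have hF : ∀ n : ℕ, F (n + 1) = Nat.fib (n + 1) := by
    intro n
    induction n using Nat.twoStepInduction with
    | zero => simpa using hF1
    | one => simpa [Nat.fib] using hF2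
    | more n ih1 ih2 =>
      have h := hFrec (n + 3) (by omega)
      have e2 : n + 3 - 1 = n + 1 + 1 := by omega
      have e3 : n + 3 - 2 = n + 1 := by omega
      rw [e2, e3] at h
      have e : n + 1 + 1 + 1 = n + 3 := by omega
      have hf3 : Nat.fib (n+3) = Nat.fib (n+1) + Nat.fib (n+1+1) := Nat.fib_add_two
      rw [e, h, ih1, ih2, hf3]
      push_cast; ring
  have hfun : (fun α : ℝ => 𝓕 α - (1 + α))
      = fun α : ℝ => ∑' k : ℕ, α / ((Nat.fib (k + 2) : ℝ) + α * Nat.fib (k + 1)) := by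
    funext α
    rw [h𝓕]
    have : (fun k : ℕ => α / (A (k + 3) + α * B (k + 3)))
        = fun k : ℕ => α / ((Nat.fib (k + 2) : ℝ) + α * Nat.fib (k + 1)) := by
      funext k; rw [hA', hB']
    rw [this]; ring
  rw [hfun]
  have hlim : (∑' n : ℕ, 1 / F (n + 1)) = ∑' k : ℕ, ((Nat.fib (k + 1) : ℝ))⁻¹ := by
    apply tsum_congr; intro n; rw [hF, one_div]
  rw [hlim]
  apply tendsto_tsum_of_dominated_convergence sum_bound
  · intro k
    have hb : (0:ℝ) < Nat.fib (k + 1) := by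
      exact_mod_cast Nat.fib_pos.mpr (Nat.succ_pos k)
    have ha : (0:ℝ) < Nat.fib (k + 2) := by
      exact_mod_cast Nat.fib_pos.mpr (by omega)
    have h1 : Filter.Tendsto (fun α : ℝ => (Nat.fib (k+2) : ℝ) * α⁻¹) Filter.atTop (nhds 0) := by
      simpa using tendsto_inv_atTop_zero.const_mul (Nat.fib (k+2) : ℝ)
    have h2 : Filter.Tendsto (fun α : ℝ => (Nat.fib (k+2) : ℝ) * α⁻¹ + Nat.fib (k+1))
        Filter.atTop (nhds ((Nat.fib (k+1) : ℝ))) := by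
      simpa using h1.add_const ((Nat.fib (k+1) : ℝ))
    have key := h2.inv₀ hb.ne'
    refine key.congr' ?_
    filter_upwards [Filter.eventually_ge_atTop (1:ℝ)] with α hα
    have hα0 : (0:ℝ) < α := by linarith
    have hd : (Nat.fib (k + 2) : ℝ) + α * Nat.fib (k + 1) > 0 := by positivity
    have he : (Nat.fib (k+2) : ℝ) * α⁻¹ + Nat.fib (k+1)
        = ((Nat.fib (k+2) : ℝ) + α * Nat.fib (k+1)) / α := by
      field_simp
    rw [he, inv_div]
  · filter_upwards [Filter.eventually_ge_atTop (1:ℝ)] with α hα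
    intro k
    have hb : (0:ℝ) < Nat.fib (k + 1) := by
      exact_mod_cast Nat.fib_pos.mpr (Nat.succ_pos k)
    have ha : (0:ℝ) < Nat.fib (k + 2) := by
      exact_mod_cast Nat.fib_pos.mpr (by omega)
    have hα0 : (0:ℝ) < α := by linarith
    have hd : (0:ℝ) < (Nat.fib (k + 2) : ℝ) + α * Nat.fib (k + 1) := by positivity
    have hnn : (0:ℝ) ≤ α / ((Nat.fib (k + 2) : ℝ) + α * Nat.fib (k + 1)) := by positivity
    rw [Real.norm_eq_abs, abs_of_nonneg hnn]
    have step : α / ((Nat.fib (k + 2) : ℝ) + α * Nat.fib (k + 1)) ≤ ((Nat.fib (k+1):ℝ))⁻¹ := by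
      rw [div_le_iff₀ hd]
      have : (1:ℝ) ≤ (Nat.fib (k+1) : ℝ) * ((Nat.fib (k+1):ℝ))⁻¹ := by
        rw [mul_inv_cancel₀ hb.ne']
      nlinarith [mul_pos hα0 hb, inv_pos.mpr hb, ha]
    exact step.trans (inv_fib_le k)
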